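/- Let H be a complex Hilbert space and let S be a closed symmetric operator in H whose domain is not dense; set H₀ := closure(dom S) and assume the orthogonal complement (dom S)^⊥ (= H₀^⊥) is finite-dimensional and nonzero. Let S̃ be a selfadjoint extension of S in H. Then the compression S̃₀ of S̃ to H₀, i.e. the operator in the Hilbert space H₀ with dom S̃₀ = dom S̃ ∩ H₀ and S̃₀x = P_{H₀}(S̃x), is a selfadjoint operator in H₀. -/

import Mathlib

set_option synthInstance.maxHeartbeats 1000000

open scoped ComplexInnerProductSpace

variable {H : Type*} [NormedAddCommGroup H] [InnerProductSpace ℂ H] [CompleteSpace H]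

/-- The compression of an operator `T` in `H` to a closed subspace `K`: the operator in the
Hilbert space `K` with domain `dom T ∩ K` acting as `x ↦ P_K (T x)`. -/
noncomputable def compression (K : Submodule ℂ H) [CompleteSpace K] (T : H →ₗ.[ℂ] H) :
    (↥K) →ₗ.[ℂ] (↥K) where
  domain := T.domain.comap K.subtype
  toFun := (K.orthogonalProjection).toLinearMap ∘ₗ T.toFun ∘ₗ
    ((K.subtype.domRestrict (T.domain.comap K.subtype)).codRestrict T.domain fun x => x.2)

lemma compression_apply (K : Submodule ℂ H) [CompleteSpace K] (T : H →ₗ.[ℂ] H)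
    (x : (compression K T).domain) :
    compression K T x = K.orthogonalProjection (T ⟨(x : K), x.2⟩) := rfl

/-- If `S` is a closed symmetric operator with non-dense domain in a complex
Hilbert space `H`, the orthogonal complement of `dom S` is finite-dimensional and nonzero, and
`S̃` is a selfadjoint extension of `S`, then the compression of `S̃` to
`H₀ = closure (dom S)` is selfadjoint in `H₀`. -/
theorem isSelfAdjoint_compression_of_finite_codim
    (S : H →ₗ.[ℂ] H)
    (hsym : ∀ x y : S.domain, ⟪S x, (y : H)⟫ = ⟪(x : H), S y⟫)
    (hclosed : S.IsClosed)
    (hnd : ¬ Dense (S.domain : Set H))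
    (hfin : FiniteDimensional ℂ ↥(S.domainᗮ)) (hne : S.domainᗮ ≠ ⊥)
    (St : H →ₗ.[ℂ] H) (hext : S ≤ St) (hsa : IsSelfAdjoint St) :
    IsSelfAdjoint (compression S.domain.topologicalClosure St) := by
  classical
  set K := S.domain.topologicalClosure with hK
  set T₀ := compression K St with hT₀
  -- N is the orthogonal complement
  set N := Kᗮ with hNdef
  have hNS : N = S.domainᗮ := Submodule.orthogonal_orthogonal (S.domainᗮ) ▸ by
    rw [hNdef, hK, ← Submodule.orthogonal_orthogonal_eq_closure,
      Submodule.orthogonal_orthogonal]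
  have hNfin : FiniteDimensional ℂ ↥N := hNS ▸ hfin
  -- density of the compression's domain in K
  have hSsubK : S.domain ≤ K := Submodule.le_topologicalClosure _
  have hdense : Dense (T₀.domain : Set ↥K) := by
    rw [dense_iff_closure_eq, ← Set.univ_subset_iff]
    intro x _
    have hsub : {v : ↥K | (v : H) ∈ S.domain} ⊆ (T₀.domain : Set ↥K) := by
      intro v hv
      exact hext.1 hv
    refine closure_mono hsub ?_
    rw [closure_subtype]
    have himg : Subtype.val '' {v : ↥K | (v : H) ∈ S.domain} = (S.domain : Set H) := by
      ext w
      constructor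
      · rintro ⟨v, hv, rfl⟩; exact hv
      · intro hw; exact ⟨⟨w, hSsubK hw⟩, hw, rfl⟩
    rw [himg]
    exact x.2
  -- symmetry of the compression
  have hStdense : Dense (St.domain : Set H) := hsa.dense_domain
  have hStsym : St.IsFormalAdjoint St := by
    have h := LinearPMap.adjoint_isFormalAdjoint (T := St) hStdense
    rw [LinearPMap.isSelfAdjoint_def] at hsa
    rwa [hsa] at h
  have hsymm : T₀.IsFormalAdjoint T₀ := by
    intro x y
    rw [compression_apply, compression_apply,
      Submodule.inner_orthogonalProjection_eq_of_mem_right, Submodule.inner_orthogonalProjection_eq_of_mem_left]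
    exact hStsym ⟨_, x.2⟩ ⟨_, y.2⟩
  have hle1 : T₀ ≤ T₀.adjoint := hsymm.le_adjoint hdense
  have hkey : ∀ y : T₀.adjoint.domain, ∃ hy : (y : ↥K) ∈ T₀.domain,
      T₀ ⟨(y : ↥K), hy⟩ = T₀.adjoint y := by
    intro y
    set z : ↥K := T₀.adjoint y with hz
    have hrel : ∀ x : T₀.domain, ⟪z, x⟫ = ⟪(y : ↥K), T₀ x⟫ := fun x =>
      LinearPMap.adjoint_isFormalAdjoint hdense y x
    -- the functional ψ on dom St
    set ψ : St.domain →ₗ[ℂ] ℂ :=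
      (innerₛₗ ℂ ((y : ↥K) : H)).comp St.toFun -
        (innerₛₗ ℂ ((z : ↥K) : H)).comp St.domain.subtype with hψ
    have hψ_apply : ∀ x : St.domain, ψ x = ⟪((y : ↥K) : H), St x⟫ - ⟪((z : ↥K) : H), (x : H)⟫ :=
      fun x => rfl
    -- the projection onto N restricted to dom St
    set q : St.domain →ₗ[ℂ] ↥N :=
      (N.orthogonalProjection).toLinearMap.comp St.domain.subtype with hq
    have hq_apply : ∀ x : St.domain, q x = N.orthogonalProjection (x : H) := fun x => rfl
    have hker : LinearMap.ker q ≤ LinearMap.ker ψ := by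
      intro x hx
      rw [LinearMap.mem_ker] at hx ⊢
      have hxK : (x : H) ∈ K := by
        have : (x : H) ∈ Nᗮ := Submodule.orthogonalProjectionOnto_eq_zero_iff.mp hx
        rwa [hNdef, Submodule.orthogonal_orthogonal] at this
      have hxd : (⟨(x : H), hxK⟩ : ↥K) ∈ T₀.domain := x.2
      have h1 := hrel ⟨⟨(x : H), hxK⟩, hxd⟩
      rw [compression_apply, Submodule.inner_orthogonalProjection_eq_of_mem_left] at h1
      rw [hψ_apply]
      rw [Submodule.coe_inner] at h1
      rw [← h1]
      simp
    -- factor ψ through the finite-dimensional space N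
    set ℓ₀ : ↥(LinearMap.range q) →ₗ[ℂ] ℂ :=
      ((LinearMap.ker q).liftQ ψ hker).comp (q.quotKerEquivRange).symm.toLinearMap with hℓ₀
    have hℓ₀_apply : ∀ x : St.domain, ℓ₀ ⟨q x, LinearMap.mem_range_self q x⟩ = ψ x := by
      intro x
      have he : (q.quotKerEquivRange).symm ⟨q x, LinearMap.mem_range_self q x⟩ =
          Submodule.Quotient.mk x := by
        rw [LinearEquiv.symm_apply_eq]
        exact Subtype.ext (q.quotKerEquivRange_apply_mk x).symm
      rw [hℓ₀]
      simp only [LinearMap.comp_apply, LinearEquiv.coe_toLinearMap, he]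
      exact Submodule.liftQ_apply _ _ _
    -- Riesz representation on the finite-dimensional range of q
    set u₀ : ↥(LinearMap.range q) :=
      (InnerProductSpace.toDual ℂ ↥(LinearMap.range q)).symm
        (LinearMap.toContinuousLinearMap ℓ₀) with hu₀
    have hu₀_apply : ∀ v : ↥(LinearMap.range q), ⟪u₀, v⟫ = ℓ₀ v := fun v =>
      InnerProductSpace.toDual_symm_apply
    set w : H := ((z : ↥K) : H) + (((u₀ : ↥N) : H)) with hw
    have hu₀N : (((u₀ : ↥N) : H)) ∈ N := ((u₀ : ↥N)).2
    have hwkey : ∀ x : St.domain, ⟪w, (x : H)⟫ = ⟪((y : ↥K) : H), St x⟫ := by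
      intro x
      rw [hw, inner_add_left]
      have h2 : ⟪(((u₀ : ↥N) : H)), (x : H)⟫ = ⟪(((u₀ : ↥N) : H)), ((q x : ↥N) : H)⟫ := by
        have horth : (x : H) - ((N.orthogonalProjection (x : H) : ↥N) : H) ∈ Nᗮ :=
          Submodule.sub_starProjection_mem_orthogonal (x : H)
        have h0 : ⟪(((u₀ : ↥N) : H)), (x : H) - ((q x : ↥N) : H)⟫ = 0 := by
          rw [hq_apply]
          exact (Submodule.mem_orthogonal N _).mp horth _ hu₀N
        rw [inner_sub_right] at h0
        linear_combination h0
      have h3 : ⟪(((u₀ : ↥N) : H)), ((q x : ↥N) : H)⟫ = ψ x := by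
        have h4 := hu₀_apply ⟨q x, LinearMap.mem_range_self q x⟩
        rw [hℓ₀_apply] at h4
        exact h4
      rw [h2, h3, hψ_apply]
      ring
    -- hence y is in the domain of St† = St
    have hySt : ((y : ↥K) : H) ∈ St.adjoint.domain :=
      LinearPMap.mem_adjoint_domain_of_exists (T := St) _ ⟨w, hwkey⟩
    have hsaEq : St.adjoint = St := hsa
    have hyd : ((y : ↥K) : H) ∈ St.domain := hsaEq ▸ hySt
    have hvalAdj : St.adjoint ⟨_, hySt⟩ = w :=
      LinearPMap.adjoint_apply_eq hStdense _ hwkey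
    have hval : St ⟨_, hyd⟩ = w := by
      rw [← (le_of_eq hsaEq).2 (x := ⟨_, hySt⟩) (y := ⟨_, hyd⟩) rfl]
      exact hvalAdj
    refine ⟨hyd, ?_⟩
    rw [compression_apply]
    have : St ⟨((⟨(y : ↥K), hyd⟩ : T₀.domain) : ↥K), hyd⟩ = w := hval
    rw [this, hw, map_add, Submodule.orthogonalProjection_mem_subspace_eq_self,
      Submodule.orthogonalProjectionOnto_eq_zero_iff.mpr hu₀N, add_zero]
  have hle2 : T₀.adjoint ≤ T₀ := by
    refine ⟨fun v hv => (hkey ⟨v, hv⟩).choose, ?_⟩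
    intro a b hab
    refine ((hkey a).choose_spec).symm.trans ?_
    congr 1
    exact Subtype.ext hab
  exact le_antisymm hle2 hle1
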